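/- Let φ be a locally integrable real-valued function on (0,∞) such that for some T ∈ (0,∞) one has liminf_{t→∞} ∫_t^{t+T} φ(τ) dτ > 0 and limsup_{t→∞} ∫_t^{t+T} φ⁻(τ) dτ < ∞. Let ψ be a measurable real-valued function on (0,∞) with ψ(t) → 0 as t → ∞. Suppose ξ is an absolutely continuous non-negative function on (0,∞) satisfying dξ/dt + φ ξ ≤ ψ almost everywhere on (0,∞). Then ξ(t) → 0 as t → ∞. -/

import Mathlib

open MeasureTheory Real Filter Topology

section GronwallHelpers
open Set

lemma fubini_primitive_swap {f h : ℝ → ℝ} {a b : ℝ}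
    (hf : IntegrableOn f (Set.Ioc a b)) (hh : IntegrableOn h (Set.Ioc a b)) :
    (∫ x in Set.Ioc a b, f x) * (∫ y in Set.Ioc a b, h y)
      = (∫ x in Set.Ioc a b, f x * ∫ y in Set.Ioc a x, h y)
        + (∫ y in Set.Ioc a b, (∫ x in Set.Ioc a y, f x) * h y) := by
  set μ := volume.restrict (Set.Ioc a b) with hμ
  have hG : Integrable (fun z : ℝ × ℝ => f z.1 * h z.2) (μ.prod μ) := hf.mul_prod hh
  have hmeas1 : MeasurableSet {z : ℝ × ℝ | z.2 ≤ z.1} :=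
    (isClosed_le continuous_snd continuous_fst).measurableSet
  have hmeas2 : MeasurableSet {z : ℝ × ℝ | z.1 ≤ z.2} :=
    (isClosed_le continuous_fst continuous_snd).measurableSet
  have hF1 : Integrable ({z : ℝ × ℝ | z.2 ≤ z.1}.indicator fun z => f z.1 * h z.2) (μ.prod μ) :=
    hG.indicator hmeas1
  have hF2 : Integrable ({z : ℝ × ℝ | z.1 ≤ z.2}.indicator fun z => f z.1 * h z.2) (μ.prod μ) :=
    hG.indicator hmeas2
  -- term 1
  have hterm1 : (∫ x in Set.Ioc a b, f x * ∫ y in Set.Ioc a x, h y)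
      = ∫ z, ({z : ℝ × ℝ | z.2 ≤ z.1}.indicator fun z => f z.1 * h z.2) z ∂(μ.prod μ) := by
    rw [← MeasureTheory.integral_integral (f := fun x y =>
        ({z : ℝ × ℝ | z.2 ≤ z.1}.indicator fun z => f z.1 * h z.2) (x, y)) (by exact hF1)]
    apply setIntegral_congr_fun measurableSet_Ioc
    intro x hx
    have : ∀ y, ({z : ℝ × ℝ | z.2 ≤ z.1}.indicator fun z => f z.1 * h z.2) (x, y)
        = (Set.Iic x).indicator (fun y => f x * h y) y := by
      intro y
      simp [Set.indicator_apply, Set.mem_Iic]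
    simp_rw [this]
    rw [integral_indicator measurableSet_Iic, hμ, Measure.restrict_restrict measurableSet_Iic,
      Set.inter_comm, Set.Ioc_inter_Iic, min_eq_right hx.2, integral_const_mul]
  have hterm2 : (∫ y in Set.Ioc a b, (∫ x in Set.Ioc a y, f x) * h y)
      = ∫ z, ({z : ℝ × ℝ | z.1 ≤ z.2}.indicator fun z => f z.1 * h z.2) z ∂(μ.prod μ) := by
    have hF1' : Integrable ({z : ℝ × ℝ | z.2 ≤ z.1}.indicator fun z => h z.1 * f z.2)
        (μ.prod μ) := (hh.mul_prod hf).indicator hmeas1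
    have := MeasureTheory.integral_prod_swap
      (f := ({z : ℝ × ℝ | z.2 ≤ z.1}.indicator fun z => h z.1 * f z.2)) (μ := μ) (ν := μ)
    have hcongr : ∀ z : ℝ × ℝ,
        ({z : ℝ × ℝ | z.2 ≤ z.1}.indicator fun z => h z.1 * f z.2) z.swap
          = ({z : ℝ × ℝ | z.1 ≤ z.2}.indicator fun z => f z.1 * h z.2) z := by
      intro z
      by_cases hz : z.1 ≤ z.2 <;> simp [Set.indicator_apply, Prod.swap, hz, mul_comm]
    rw [← funext hcongr, this]
    rw [← MeasureTheory.integral_integral (f := fun x y =>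
        ({z : ℝ × ℝ | z.2 ≤ z.1}.indicator fun z => h z.1 * f z.2) (x, y)) (by exact hF1')]
    apply setIntegral_congr_fun measurableSet_Ioc
    intro x hx
    have : ∀ y, ({z : ℝ × ℝ | z.2 ≤ z.1}.indicator fun z => h z.1 * f z.2) (x, y)
        = (Set.Iic x).indicator (fun y => h x * f y) y := by
      intro y
      simp [Set.indicator_apply, Set.mem_Iic]
    simp_rw [this]
    rw [integral_indicator measurableSet_Iic, hμ, Measure.restrict_restrict measurableSet_Iic,
      Set.inter_comm, Set.Ioc_inter_Iic, min_eq_right hx.2, integral_const_mul]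
    ring
  rw [hterm1, hterm2, ← MeasureTheory.integral_add hF1 hF2]
  have hdiag : (μ.prod μ) {z : ℝ × ℝ | z.1 = z.2} = 0 := by
    have hms : MeasurableSet {z : ℝ × ℝ | z.1 = z.2} :=
      (isClosed_eq continuous_fst continuous_snd).measurableSet
    rw [Measure.prod_apply hms]
    have : ∀ x : ℝ, μ (Prod.mk x ⁻¹' {z : ℝ × ℝ | z.1 = z.2}) = 0 := by
      intro x
      have : (Prod.mk x ⁻¹' {z : ℝ × ℝ | z.1 = z.2}) = {x} := by
        ext y; simp [eq_comm]
      rw [this, hμ]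
      exact le_antisymm (le_trans (Measure.restrict_le_self _) (by simp)) bot_le
    simp [this]
  have hpt : (fun z : ℝ × ℝ => ({z : ℝ × ℝ | z.2 ≤ z.1}.indicator fun z => f z.1 * h z.2) z
      + ({z : ℝ × ℝ | z.1 ≤ z.2}.indicator fun z => f z.1 * h z.2) z)
      =ᵐ[μ.prod μ] (fun z : ℝ × ℝ => f z.1 * h z.2) := by
    have : ∀ᵐ z ∂(μ.prod μ), z.1 ≠ z.2 := by
      rw [ae_iff]
      convert hdiag using 2
      ext z; simp
    filter_upwards [this] with z hz
    rcases le_total z.1 z.2 with h1 | h1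
    · have h2 : ¬ (z.2 ≤ z.1) := fun h2 => hz (le_antisymm h1 h2)
      simp [Set.indicator_apply, h1, h2]
    · have h2 : ¬ (z.1 ≤ z.2) := fun h2 => hz (le_antisymm h2 h1)
      simp [Set.indicator_apply, h1, h2]
  rw [integral_congr_ae hpt, MeasureTheory.integral_prod_mul (μ := μ) (ν := μ) f h]

lemma integrableOn_Icc_of_Ioc {f : ℝ → ℝ} {a b : ℝ} (hf : IntegrableOn f (Set.Ioc a b)) :
    IntegrableOn f (Set.Icc a b) :=
  (integrableOn_Icc_iff_integrableOn_Ioc enorm_ne_top).2 hf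

lemma parts_primitive {f h : ℝ → ℝ} {a b cu cv : ℝ} (hab : a ≤ b)
    (hf : IntegrableOn f (Set.Ioc a b)) (hh : IntegrableOn h (Set.Ioc a b)) :
    (cu + ∫ x in Set.Ioc a b, f x) * (cv + ∫ y in Set.Ioc a b, h y)
      = cu * cv + ∫ x in Set.Ioc a b,
          (f x * (cv + ∫ y in Set.Ioc a x, h y) + (cu + ∫ y in Set.Ioc a x, f y) * h x) := by
  set Pf : ℝ → ℝ := fun x => ∫ y in Set.Ioc a x, f y with hPf
  set Ph : ℝ → ℝ := fun x => ∫ y in Set.Ioc a x, h y with hPh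
  have hcf : ContinuousOn Pf (Set.Icc a b) :=
    intervalIntegral.continuousOn_primitive (integrableOn_Icc_of_Ioc hf)
  have hch : ContinuousOn Ph (Set.Icc a b) :=
    intervalIntegral.continuousOn_primitive (integrableOn_Icc_of_Ioc hh)
  obtain ⟨Cf, hCf⟩ := isCompact_Icc.exists_bound_of_continuousOn hcf
  obtain ⟨Ch, hCh⟩ := isCompact_Icc.exists_bound_of_continuousOn hch
  have hmf : AEStronglyMeasurable Pf (volume.restrict (Set.Ioc a b)) :=
    (hcf.mono Set.Ioc_subset_Icc_self).aestronglyMeasurable measurableSet_Ioc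
  have hmh : AEStronglyMeasurable Ph (volume.restrict (Set.Ioc a b)) :=
    (hch.mono Set.Ioc_subset_Icc_self).aestronglyMeasurable measurableSet_Ioc
  have hae : ∀ᵐ x ∂(volume.restrict (Set.Ioc a b)), x ∈ Set.Ioc a b :=
    ae_restrict_mem measurableSet_Ioc
  have i1 : IntegrableOn (fun x => f x * Ph x) (Set.Ioc a b) := by
    refine Integrable.mono' (hf.norm.mul_const Ch) (hf.aestronglyMeasurable.mul hmh) ?_
    filter_upwards [hae] with x hx
    rw [norm_mul]
    exact mul_le_mul_of_nonneg_left (hCh x (Set.Ioc_subset_Icc_self hx)) (norm_nonneg _)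
  have i2 : IntegrableOn (fun x => Pf x * h x) (Set.Ioc a b) := by
    refine Integrable.mono' (hh.norm.const_mul Cf) (hmf.mul hh.aestronglyMeasurable) ?_
    filter_upwards [hae] with x hx
    rw [norm_mul]
    exact mul_le_mul_of_nonneg_right (hCf x (Set.Ioc_subset_Icc_self hx)) (norm_nonneg _)
  have i3 : IntegrableOn (fun x => f x * cv) (Set.Ioc a b) := hf.mul_const cv
  have i4 : IntegrableOn (fun x => cu * h x) (Set.Ioc a b) := hh.const_mul cu
  have hsplit : (∫ x in Set.Ioc a b,
        (f x * (cv + ∫ y in Set.Ioc a x, h y) + (cu + ∫ y in Set.Ioc a x, f y) * h x))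
      = (∫ x in Set.Ioc a b, f x * cv) + (∫ x in Set.Ioc a b, f x * Ph x)
        + ((∫ x in Set.Ioc a b, cu * h x) + (∫ x in Set.Ioc a b, Pf x * h x)) := by
    have e1 : (∫ x in Set.Ioc a b,
        (f x * (cv + ∫ y in Set.Ioc a x, h y) + (cu + ∫ y in Set.Ioc a x, f y) * h x))
        = ∫ x in Set.Ioc a b, ((f x * cv + f x * Ph x) + (cu * h x + Pf x * h x)) := by
      apply setIntegral_congr_fun measurableSet_Ioc
      intro x _
      simp only [hPf, hPh]
      ring
    have i13 : IntegrableOn (fun x => f x * cv + f x * Ph x) (Set.Ioc a b) := i3.add i1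
    have i24 : IntegrableOn (fun x => cu * h x + Pf x * h x) (Set.Ioc a b) := i4.add i2
    rw [e1, MeasureTheory.integral_add i13 i24, MeasureTheory.integral_add i3 i1,
      MeasureTheory.integral_add i4 i2]
  rw [hsplit, MeasureTheory.integral_mul_const, MeasureTheory.integral_const_mul]
  have hfub := fubini_primitive_swap hf hh
  simp only [hPf, hPh] at *
  linear_combination hfub

lemma integrable_mul_pow_primitive {φ : ℝ → ℝ} {a b : ℝ}
    (hφ : IntegrableOn φ (Set.Ioc a b)) (n : ℕ) :
    IntegrableOn (fun s => φ s * (∫ r in Set.Ioc a s, φ r) ^ n) (Set.Ioc a b) := by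
  set Φ : ℝ → ℝ := fun x => ∫ y in Set.Ioc a x, φ y with hΦ
  have hc : ContinuousOn (fun s => Φ s ^ n) (Set.Icc a b) :=
    (intervalIntegral.continuousOn_primitive (integrableOn_Icc_of_Ioc hφ)).pow n
  obtain ⟨C, hC⟩ := isCompact_Icc.exists_bound_of_continuousOn hc
  refine Integrable.mono' (hφ.norm.mul_const C)
    (hφ.aestronglyMeasurable.mul
      ((hc.mono Set.Ioc_subset_Icc_self).aestronglyMeasurable measurableSet_Ioc)) ?_
  filter_upwards [ae_restrict_mem measurableSet_Ioc] with x hx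
  rw [norm_mul]
  exact mul_le_mul_of_nonneg_left (hC x (Set.Ioc_subset_Icc_self hx)) (norm_nonneg _)

lemma pow_primitive_identity {φ : ℝ → ℝ} {a b : ℝ}
    (hφ : IntegrableOn φ (Set.Ioc a b)) (n : ℕ) :
    ∀ t ∈ Set.Icc a b, (∫ s in Set.Ioc a t, φ s) ^ (n + 1)
      = (n + 1 : ℝ) * ∫ s in Set.Ioc a t, φ s * (∫ r in Set.Ioc a s, φ r) ^ n := by
  induction n with
  | zero => intro t ht; simp
  | succ n IH =>
    intro t ht
    have hat : a ≤ t := ht.1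
    have hφt : IntegrableOn φ (Set.Ioc a t) := hφ.mono_set (Set.Ioc_subset_Ioc_right ht.2)
    have hhint : IntegrableOn
        (fun s => (n + 1 : ℝ) * (φ s * (∫ r in Set.Ioc a s, φ r) ^ n)) (Set.Ioc a t) :=
      (integrable_mul_pow_primitive hφt n).const_mul _
    have hIHx : ∀ x ∈ Set.Icc a t,
        (∫ y in Set.Ioc a x, (n + 1 : ℝ) * (φ y * (∫ r in Set.Ioc a y, φ r) ^ n))
          = (∫ s in Set.Ioc a x, φ s) ^ (n + 1) := by
      intro x hx
      rw [MeasureTheory.integral_const_mul]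
      exact (IH x ⟨hx.1, hx.2.trans ht.2⟩).symm
    have hparts := parts_primitive (cu := (0 : ℝ)) (cv := (0 : ℝ)) hat hφt hhint
    rw [hIHx t (Set.mem_Icc.2 ⟨hat, le_refl t⟩)] at hparts
    have hcong : (∫ x in Set.Ioc a t,
        (φ x * (0 + ∫ y in Set.Ioc a x, (n + 1 : ℝ) * (φ y * (∫ r in Set.Ioc a y, φ r) ^ n))
          + (0 + ∫ y in Set.Ioc a x, φ y) * ((n + 1 : ℝ) * (φ x * (∫ r in Set.Ioc a x, φ r) ^ n))))
        = ∫ x in Set.Ioc a t, ((n : ℝ) + 2) * (φ x * (∫ r in Set.Ioc a x, φ r) ^ (n + 1)) := by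
      apply setIntegral_congr_fun measurableSet_Ioc
      intro x hx
      dsimp only
      rw [hIHx x (Set.Ioc_subset_Icc_self hx)]
      ring
    rw [hcong, MeasureTheory.integral_const_mul] at hparts
    push_cast
    push_cast at hparts
    linear_combination hparts

lemma exp_primitive_identity {φ : ℝ → ℝ} {a b : ℝ} (hab : a ≤ b)
    (hφ : IntegrableOn φ (Set.Ioc a b)) :
    Real.exp (∫ s in Set.Ioc a b, φ s)
      = 1 + ∫ s in Set.Ioc a b, φ s * Real.exp (∫ r in Set.Ioc a s, φ r) := by
  have hexp : ∀ x : ℝ, Real.exp x = ∑' n : ℕ, x ^ n / (Nat.factorial n) := by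
    intro x
    rw [Real.exp_eq_exp_ℝ, NormedSpace.exp_eq_tsum_div]
  set Φ : ℝ → ℝ := fun x => ∫ y in Set.Ioc a x, φ y with hΦ
  have hcΦ : ContinuousOn Φ (Set.Icc a b) :=
    intervalIntegral.continuousOn_primitive (integrableOn_Icc_of_Ioc hφ)
  obtain ⟨C, hC⟩ := isCompact_Icc.exists_bound_of_continuousOn hcΦ
  have hint : ∀ n : ℕ, IntegrableOn (fun s => φ s * Φ s ^ n / (Nat.factorial n)) (Set.Ioc a b) :=
    fun n => (integrable_mul_pow_primitive hφ n).div_const _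
  have hbound : ∀ n : ℕ, (∫ s in Set.Ioc a b, ‖φ s * Φ s ^ n / (Nat.factorial n)‖)
      ≤ (∫ s in Set.Ioc a b, ‖φ s‖) * (C ^ n / (Nat.factorial n)) := by
    intro n
    rw [← MeasureTheory.integral_mul_const]
    apply MeasureTheory.integral_mono_of_nonneg
      (Filter.Eventually.of_forall fun s => norm_nonneg _) (hφ.norm.mul_const _)
    filter_upwards [ae_restrict_mem measurableSet_Ioc] with s hs
    have h1 : ‖Φ s‖ ≤ C := hC s (Set.Ioc_subset_Icc_self hs)
    have h2 : ‖φ s * Φ s ^ n / (Nat.factorial n)‖ = ‖φ s‖ * (‖Φ s‖ ^ n / (Nat.factorial n)) := by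
      rw [norm_div, norm_mul, norm_pow, Real.norm_natCast, mul_div_assoc]
    rw [h2]
    gcongr
  have hsum : Summable (fun n : ℕ => ∫ s in Set.Ioc a b, ‖φ s * Φ s ^ n / (Nat.factorial n)‖) := by
    apply Summable.of_nonneg_of_le (fun n => integral_nonneg fun s => norm_nonneg _) hbound
    exact (Real.summable_pow_div_factorial C).mul_left _
  have hswap := MeasureTheory.integral_tsum_of_summable_integral_norm
    (F := fun (n : ℕ) (s : ℝ) => φ s * Φ s ^ n / (Nat.factorial n)) (fun n => hint n) hsum
  have hpt : ∀ s : ℝ, (∑' n : ℕ, φ s * Φ s ^ n / (Nat.factorial n)) = φ s * Real.exp (Φ s) := by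
    intro s
    rw [hexp (Φ s), ← tsum_mul_left]
    congr 1; funext n; ring
  have hval : ∀ n : ℕ, (∫ s in Set.Ioc a b, φ s * Φ s ^ n / (Nat.factorial n))
      = Φ b ^ (n + 1) / (Nat.factorial (n+1)) := by
    intro n
    rw [MeasureTheory.integral_div]
    have hid := pow_primitive_identity hφ n b ⟨hab, le_refl b⟩
    have hne : ((n : ℝ) + 1) ≠ 0 := by positivity
    have h2 : (∫ s in Set.Ioc a b, φ s * Φ s ^ n) = Φ b ^ (n + 1) / ((n : ℝ) + 1) := by
      rw [eq_div_iff hne]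
      linarith [hid]
    rw [h2, div_div]
    congr 1
    push_cast [Nat.factorial_succ]
    ring
  have hmain : (∫ s in Set.Ioc a b, φ s * Real.exp (Φ s))
      = ∑' n : ℕ, Φ b ^ (n + 1) / (Nat.factorial (n+1)) := by
    calc (∫ s in Set.Ioc a b, φ s * Real.exp (Φ s))
        = ∫ s in Set.Ioc a b, ∑' n : ℕ, φ s * Φ s ^ n / (Nat.factorial n) := by
          apply setIntegral_congr_fun measurableSet_Ioc
          intro s _
          exact (hpt s).symm
      _ = ∑' n : ℕ, ∫ s in Set.Ioc a b, φ s * Φ s ^ n / (Nat.factorial n) := hswap.symm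
      _ = ∑' n : ℕ, Φ b ^ (n + 1) / (Nat.factorial (n+1)) := tsum_congr hval
  rw [hmain, hexp (Φ b), Summable.tsum_eq_zero_add (Real.summable_pow_div_factorial (Φ b))]
  norm_num

lemma my_integrableOn_mul_cont {f v : ℝ → ℝ} {a b : ℝ}
    (hf : IntegrableOn f (Set.Ioc a b)) (hv : ContinuousOn v (Set.Icc a b)) :
    IntegrableOn (fun x => f x * v x) (Set.Ioc a b) := by
  obtain ⟨C, hC⟩ := isCompact_Icc.exists_bound_of_continuousOn hv
  refine Integrable.mono' (hf.norm.mul_const C)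
    (hf.aestronglyMeasurable.mul
      ((hv.mono Set.Ioc_subset_Icc_self).aestronglyMeasurable measurableSet_Ioc)) ?_
  filter_upwards [ae_restrict_mem measurableSet_Ioc] with x hx
  rw [norm_mul]
  exact mul_le_mul_of_nonneg_left (hC x (Set.Ioc_subset_Icc_self hx)) (norm_nonneg _)

lemma my_integrableOn_cont_mul {f v : ℝ → ℝ} {a b : ℝ}
    (hf : IntegrableOn f (Set.Ioc a b)) (hv : ContinuousOn v (Set.Icc a b)) :
    IntegrableOn (fun x => v x * f x) (Set.Ioc a b) := by
  have := my_integrableOn_mul_cont hf hv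
  apply this.congr_fun (fun x _ => mul_comm (f x) (v x)) measurableSet_Ioc

lemma key_estimate {φ g ψ ξ : ℝ → ℝ} {a b ε : ℝ} (hab : a ≤ b)
    (hφ : IntegrableOn φ (Set.Ioc a b))
    (hg : IntegrableOn g (Set.Ioc a b))
    (hψi : IntegrableOn ψ (Set.Ioc a b))
    (hψε : ∀ s ∈ Set.Ioc a b, |ψ s| ≤ ε)
    (hε : 0 ≤ ε)
    (hξa : 0 ≤ ξ a)
    (hFTC : ∀ t, a ≤ t → t ≤ b → ξ t = ξ a + ∫ τ in Set.Ioc a t, g τ)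
    (hODE : ∀ᵐ t ∂(volume.restrict (Set.Ioc a b)), g t + φ t * ξ t ≤ ψ t) :
    ξ b ≤ ξ a * Real.exp (-∫ s in Set.Ioc a b, φ s)
      + ε * (b - a) * Real.exp (∫ s in Set.Ioc a b, max (-φ s) 0) := by
  set Φ : ℝ → ℝ := fun t => ∫ s in Set.Ioc a t, φ s with hΦdef
  set E : ℝ → ℝ := fun t => Real.exp (Φ t) with hEdef
  have hcΦ : ContinuousOn Φ (Set.Icc a b) :=
    intervalIntegral.continuousOn_primitive (integrableOn_Icc_of_Ioc hφ)
  have hcE : ContinuousOn E (Set.Icc a b) := Real.continuous_exp.comp_continuousOn hcΦ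
  have hEpos : ∀ t, 0 < E t := fun t => Real.exp_pos _
  have hφE : IntegrableOn (fun s => φ s * E s) (Set.Ioc a b) := my_integrableOn_mul_cont hφ hcE
  have hEid : ∀ t ∈ Set.Icc a b, E t = 1 + ∫ s in Set.Ioc a t, φ s * E s := by
    intro t ht
    exact exp_primitive_identity ht.1 (hφ.mono_set (Set.Ioc_subset_Ioc_right ht.2))
  have hξc : ContinuousOn ξ (Set.Icc a b) := by
    have : ContinuousOn (fun t => ξ a + ∫ τ in Set.Ioc a t, g τ) (Set.Icc a b) :=
      continuousOn_const.add (intervalIntegral.continuousOn_primitive (integrableOn_Icc_of_Ioc hg))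
    exact this.congr fun t ht => hFTC t ht.1 ht.2
  have hgE : IntegrableOn (fun x => g x * E x) (Set.Ioc a b) := my_integrableOn_mul_cont hg hcE
  have hξφE : IntegrableOn (fun x => ξ x * (φ x * E x)) (Set.Ioc a b) :=
    my_integrableOn_cont_mul hφE hξc
  have hparts := parts_primitive (cu := ξ a) (cv := (1 : ℝ)) hab hg hφE
  have hξb : ξ b = ξ a + ∫ τ in Set.Ioc a b, g τ := hFTC b hab le_rfl
  have hEb : E b = 1 + ∫ s in Set.Ioc a b, φ s * E s := hEid b ⟨hab, le_rfl⟩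
  have hcong : (∫ x in Set.Ioc a b,
      (g x * (1 + ∫ y in Set.Ioc a x, φ y * E y) + (ξ a + ∫ y in Set.Ioc a x, g y) * (φ x * E x)))
      = ∫ x in Set.Ioc a b, (g x + φ x * ξ x) * E x := by
    apply setIntegral_congr_fun measurableSet_Ioc
    intro x hx
    dsimp only
    rw [← hEid x ⟨hx.1.le, hx.2⟩, ← hFTC x hx.1.le hx.2]
    ring
  have keyid : ξ b * E b = ξ a + ∫ x in Set.Ioc a b, (g x + φ x * ξ x) * E x := by
    rw [hξb, hEb, hparts, hcong]
    ring
  have hsumint : IntegrableOn (fun x => (g x + φ x * ξ x) * E x) (Set.Ioc a b) := by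
    refine MeasureTheory.IntegrableOn.congr_fun (hgE.add hξφE) ?_ measurableSet_Ioc
    intro x _
    simp only [Pi.add_apply]
    ring
  have hψE : IntegrableOn (fun x => ψ x * E x) (Set.Ioc a b) := my_integrableOn_mul_cont hψi hcE
  have hmono : (∫ x in Set.Ioc a b, (g x + φ x * ξ x) * E x)
      ≤ ∫ x in Set.Ioc a b, ψ x * E x := by
    apply MeasureTheory.integral_mono_ae hsumint hψE
    have hODE' : ∀ᵐ x ∂(volume.restrict (Set.Ioc a b)), g x + φ x * ξ x ≤ ψ x := hODE
    filter_upwards [hODE'] with x hx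
    exact mul_le_mul_of_nonneg_right hx (hEpos x).le
  have hnegpart : IntegrableOn (fun s => max (-φ s) 0) (Set.Ioc a b) := hφ.neg_part
  have hEbound : ∀ s ∈ Set.Ioc a b, E s ≤ Real.exp (∫ u in Set.Ioc a b, max (-φ u) 0) * E b := by
    intro s hs
    have hφs : IntegrableOn φ (Set.Ioc a s) := hφ.mono_set (Set.Ioc_subset_Ioc_right hs.2)
    have hφsb : IntegrableOn φ (Set.Ioc s b) := hφ.mono_set (Set.Ioc_subset_Ioc_left hs.1.le)
    have hsplit : Φ b = Φ s + ∫ r in Set.Ioc s b, φ r := by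
      simp only [hΦdef]
      rw [← Set.Ioc_union_Ioc_eq_Ioc hs.1.le hs.2,
        MeasureTheory.setIntegral_union (Set.Ioc_disjoint_Ioc_of_le le_rfl)
          measurableSet_Ioc hφs hφsb]
    have h1 : -(∫ r in Set.Ioc s b, φ r) ≤ ∫ r in Set.Ioc s b, max (-φ r) 0 := by
      rw [← MeasureTheory.integral_neg]
      exact MeasureTheory.integral_mono hφsb.neg (hnegpart.mono_set
        (Set.Ioc_subset_Ioc_left hs.1.le)) fun r => le_max_left _ _
    have h2 : (∫ r in Set.Ioc s b, max (-φ r) 0) ≤ (∫ u in Set.Ioc a b, max (-φ u) 0) := by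
      apply setIntegral_mono_set hnegpart
      · filter_upwards with r using le_max_right _ _
      · exact (Set.Ioc_subset_Ioc_left hs.1.le).eventuallyLE
    have hΦsb : Φ s ≤ (∫ u in Set.Ioc a b, max (-φ u) 0) + Φ b := by linarith
    calc E s = Real.exp (Φ s) := rfl
      _ ≤ Real.exp ((∫ u in Set.Ioc a b, max (-φ u) 0) + Φ b) := Real.exp_le_exp.2 hΦsb
      _ = Real.exp (∫ u in Set.Ioc a b, max (-φ u) 0) * E b := by rw [Real.exp_add]
  have hconst : (∫ x in Set.Ioc a b, ψ x * E x) ≤ (b - a) * (ε * (Real.exp (∫ u in Set.Ioc a b, max (-φ u) 0) * E b)) := by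
    have hci : IntegrableOn (fun _ : ℝ => ε * (Real.exp (∫ u in Set.Ioc a b, max (-φ u) 0) * E b)) (Set.Ioc a b) :=
      integrableOn_const measure_Ioc_lt_top.ne
    have := MeasureTheory.integral_mono_ae hψE hci ?ae
    case ae =>
      filter_upwards [ae_restrict_mem measurableSet_Ioc] with x hx
      have hψx : ψ x ≤ ε := (le_abs_self _).trans (hψε x hx)
      calc ψ x * E x ≤ ε * E x := mul_le_mul_of_nonneg_right hψx (hEpos x).le
        _ ≤ ε * (Real.exp (∫ u in Set.Ioc a b, max (-φ u) 0) * E b) := mul_le_mul_of_nonneg_left (hEbound x hx) hε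
    rw [MeasureTheory.setIntegral_const, Real.volume_real_Ioc,
      max_eq_left (sub_nonneg.2 hab), smul_eq_mul] at this
    linarith
  have hfinal : ξ b * E b ≤ ξ a + (b - a) * (ε * (Real.exp (∫ u in Set.Ioc a b, max (-φ u) 0) * E b)) := by
    rw [keyid]
    linarith
  simp only [hEdef, hΦdef] at hfinal
  have hEbpos : (0 : ℝ) < Real.exp (∫ s in Set.Ioc a b, φ s) := Real.exp_pos _
  rw [← mul_le_mul_iff_of_pos_right hEbpos, Real.exp_neg]
  have hcancel : (Real.exp (∫ s in Set.Ioc a b, φ s))⁻¹ * Real.exp (∫ s in Set.Ioc a b, φ s)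
      = 1 := inv_mul_cancel₀ hEbpos.ne'
  have hrhs : (ξ a * (Real.exp (∫ s in Set.Ioc a b, φ s))⁻¹ + ε * (b - a) * Real.exp (∫ u in Set.Ioc a b, max (-φ u) 0))
      * Real.exp (∫ s in Set.Ioc a b, φ s)
      = ξ a + (b - a) * (ε * (Real.exp (∫ u in Set.Ioc a b, max (-φ u) 0) * Real.exp (∫ s in Set.Ioc a b, φ s))) := by
    rw [add_mul, mul_assoc, hcancel, mul_one]
    ring
  rw [hrhs]
  exact hfinal


end GronwallHelpers

set_option maxHeartbeats 2000000 in
/-- **Generalized Grönwall lemma** (Foias–Manley–Temam–Trève).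
Let `φ` be locally integrable on `(0,∞)` such that for some `T ∈ (0,∞)`,
`liminf_{t→∞} ∫_t^{t+T} φ > 0` and `limsup_{t→∞} ∫_t^{t+T} φ⁻ < ∞`
(where `φ⁻ = max (-φ) 0`).  Let `ψ` be measurable with `ψ(t) → 0` as `t → ∞`.
If `ξ` is an absolutely continuous nonnegative function on `(0,∞)`
(encoded by the fundamental theorem of calculus with a locally integrable
a.e. derivative `g`) satisfying `ξ' + φ ξ ≤ ψ` a.e. on `(0,∞)`, then
`ξ(t) → 0` as `t → ∞`. -/
theorem generalized_gronwall (φ ψ ξ g : ℝ → ℝ) (T : ℝ) (hT : 0 < T)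
    (hφloc : LocallyIntegrableOn φ (Set.Ioi 0))
    (hliminf : ∃ c : ℝ, 0 < c ∧ ∀ᶠ t in atTop, c ≤ ∫ τ in t..(t + T), φ τ)
    (hlimsup : ∃ M : ℝ, ∀ᶠ t in atTop, (∫ τ in t..(t + T), max (-φ τ) 0) ≤ M)
    (hψmeas : Measurable ψ)
    (hψ : Tendsto ψ atTop (𝓝 0))
    (hξnonneg : ∀ t ∈ Set.Ioi (0 : ℝ), 0 ≤ ξ t)
    (hgloc : LocallyIntegrableOn g (Set.Ioi 0))
    (hFTC : ∀ a b : ℝ, 0 < a → a ≤ b → ξ b - ξ a = ∫ τ in a..b, g τ)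
    (hODE : ∀ᵐ t ∂(volume.restrict (Set.Ioi (0 : ℝ))), g t + φ t * ξ t ≤ ψ t) :
    Tendsto ξ atTop (𝓝 0) := by
  obtain ⟨c, hc, hlif⟩ := hliminf
  obtain ⟨M₀, hlsup⟩ := hlimsup
  set M : ℝ := max M₀ 0 with hMdef
  set θ : ℝ := Real.exp (-c) with hθdef
  have hθ0 : 0 < θ := Real.exp_pos _
  have hθ1 : θ < 1 := by
    rw [hθdef, show (1 : ℝ) = Real.exp 0 by simp]
    exact Real.exp_lt_exp.2 (by linarith)
  -- integrability helpers
  have hφint : ∀ x y : ℝ, 0 < x → IntegrableOn φ (Set.Ioc x y) := by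
    intro x y hx
    refine (hφloc.integrableOn_compact_subset ?_ isCompact_Icc).mono_set
      Set.Ioc_subset_Icc_self (μ := volume)
    intro z hz
    exact lt_of_lt_of_le hx hz.1
  have hgint : ∀ x y : ℝ, 0 < x → IntegrableOn g (Set.Ioc x y) := by
    intro x y hx
    refine (hgloc.integrableOn_compact_subset ?_ isCompact_Icc).mono_set
      Set.Ioc_subset_Icc_self (μ := volume)
    intro z hz
    exact lt_of_lt_of_le hx hz.1
  rw [NormedAddCommGroup.tendsto_nhds_zero]
  intro δ hδ
  set Cc : ℝ := Real.exp M * (T * Real.exp M) / (1 - θ) + T * Real.exp M with hCcdef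
  have hCc : 0 < Cc := by
    have h1 : (0:ℝ) < 1 - θ := by linarith
    positivity
  set ε : ℝ := δ / (2 * Cc) with hεdef
  have hε : 0 < ε := by positivity
  have hψev : ∀ᶠ t in atTop, ‖ψ t‖ < ε := by
    rw [NormedAddCommGroup.tendsto_nhds_zero] at hψ
    exact hψ ε hε
  have hev : ∀ᶠ t in atTop, (c ≤ ∫ τ in t..(t + T), φ τ)
      ∧ ((∫ τ in t..(t + T), max (-φ τ) 0) ≤ M₀) ∧ ‖ψ t‖ < ε ∧ 1 ≤ t := by
    filter_upwards [hlif, hlsup, hψev, eventually_ge_atTop (1:ℝ)] with t h1 h2 h3 h4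
    exact ⟨h1, h2, h3, h4⟩
  obtain ⟨t₂, ht₂⟩ := eventually_atTop.1 hev
  set t₃ : ℝ := max t₂ 1 with ht₃def
  have ht₃1 : (1:ℝ) ≤ t₃ := le_max_right _ _
  have ht₃0 : (0:ℝ) < t₃ := lt_of_lt_of_le one_pos ht₃1
  have hP : ∀ t, t₃ ≤ t → (c ≤ ∫ τ in t..(t + T), φ τ)
      ∧ ((∫ τ in t..(t + T), max (-φ τ) 0) ≤ M₀) ∧ ‖ψ t‖ < ε ∧ 1 ≤ t :=
    fun t ht => ht₂ t ((le_max_left _ _).trans ht)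
  have hψbd : ∀ s ∈ Set.Ici t₃, |ψ s| ≤ ε := fun s hs => ((hP s hs).2.2.1).le
  have hψint : ∀ x y : ℝ, t₃ ≤ x → IntegrableOn ψ (Set.Ioc x y) := by
    intro x y hx
    refine Integrable.mono' (integrableOn_const measure_Ioc_lt_top.ne : IntegrableOn (fun _ : ℝ => ε) _ _)
      (hψmeas.aestronglyMeasurable.restrict) ?_
    filter_upwards [ae_restrict_mem measurableSet_Ioc] with s hs
    exact hψbd s (hx.trans hs.1.le)
  -- negative part integral bounds over subwindows
  have hnegsub : ∀ t s, t₃ ≤ t → t ≤ s → s ≤ t + T →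
      (∫ u in Set.Ioc t s, max (-φ u) 0) ≤ M := by
    intro t s ht hts hst
    have h1 : (∫ u in Set.Ioc t s, max (-φ u) 0) ≤ ∫ u in Set.Ioc t (t+T), max (-φ u) 0 := by
      apply setIntegral_mono_set ((hφint t (t+T) (ht₃0.trans_le ht)).neg_part)
      · filter_upwards with r using le_max_right _ _
      · exact (Set.Ioc_subset_Ioc_right hst).eventuallyLE
    have h2 := (hP t ht).2.1
    rw [intervalIntegral.integral_of_le (by linarith)] at h2
    exact h1.trans (h2.trans (le_max_left _ _))
  -- the two estimates
  have hFTC' : ∀ a t : ℝ, 0 < a → a ≤ t → ξ t = ξ a + ∫ τ in Set.Ioc a t, g τ := by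
    intro a t ha hat
    have h := hFTC a t ha hat
    rw [intervalIntegral.integral_of_le hat] at h
    linarith
  have hODE' : ∀ a b : ℝ, 0 < a →
      ∀ᵐ t ∂(volume.restrict (Set.Ioc a b)), g t + φ t * ξ t ≤ ψ t := by
    intro a b ha
    refine ae_restrict_of_ae_restrict_of_subset ?_ hODE
    intro z hz
    exact ha.trans hz.1
  have hstep : ∀ t, t₃ ≤ t → ξ (t + T) ≤ θ * ξ t + ε * T * Real.exp M := by
    intro t ht
    have ht0 : 0 < t := ht₃0.trans_le ht
    have hξt : 0 ≤ ξ t := hξnonneg t ht0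
    have h := key_estimate (φ := φ) (g := g) (ψ := ψ) (ξ := ξ) (a := t) (b := t + T)
      (by linarith) (hφint t (t+T) ht0) (hgint t (t+T) ht0) (hψint t (t+T) ht)
      (fun s hs => hψbd s (ht.trans hs.1.le)) hε.le hξt
      (fun u hu1 hu2 => hFTC' t u ht0 hu1) (hODE' t (t+T) ht0)
    have hwin := (hP t ht).1
    rw [intervalIntegral.integral_of_le (by linarith : t ≤ t + T)] at hwin
    have e1 : Real.exp (-∫ s in Set.Ioc t (t+T), φ s) ≤ θ := by
      rw [hθdef]
      exact Real.exp_le_exp.2 (by linarith)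
    have e2 : Real.exp (∫ u in Set.Ioc t (t+T), max (-φ u) 0) ≤ Real.exp M :=
      Real.exp_le_exp.2 (hnegsub t (t+T) ht (by linarith) le_rfl)
    calc ξ (t + T) ≤ ξ t * Real.exp (-∫ s in Set.Ioc t (t+T), φ s)
          + ε * (t + T - t) * Real.exp (∫ u in Set.Ioc t (t+T), max (-φ u) 0) := h
      _ ≤ ξ t * θ + ε * T * Real.exp M := by
          have heq : ε * (t + T - t) = ε * T := by ring
          rw [heq]
          exact add_le_add (mul_le_mul_of_nonneg_left e1 hξt)
            (mul_le_mul_of_nonneg_left e2 (by positivity))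
      _ = θ * ξ t + ε * T * Real.exp M := by ring
  have hmid : ∀ t s, t₃ ≤ t → t ≤ s → s ≤ t + T →
      ξ s ≤ ξ t * Real.exp M + ε * T * Real.exp M := by
    intro t s ht hts hst
    have ht0 : 0 < t := ht₃0.trans_le ht
    have hξt : 0 ≤ ξ t := hξnonneg t ht0
    have h := key_estimate (φ := φ) (g := g) (ψ := ψ) (ξ := ξ) (a := t) (b := s)
      hts (hφint t s ht0) (hgint t s ht0) (hψint t s ht)
      (fun u hu => hψbd u (ht.trans hu.1.le)) hε.le hξt
      (fun u hu1 hu2 => hFTC' t u ht0 hu1) (hODE' t s ht0)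
    have hi := hφint t s ht0
    have h1 : -(∫ u in Set.Ioc t s, φ u) ≤ ∫ u in Set.Ioc t s, max (-φ u) 0 := by
      rw [← MeasureTheory.integral_neg]
      exact MeasureTheory.integral_mono hi.neg hi.neg_part fun r => le_max_left _ _
    have h2 := hnegsub t s ht hts hst
    have e1 : Real.exp (-∫ u in Set.Ioc t s, φ u) ≤ Real.exp M :=
      Real.exp_le_exp.2 (h1.trans h2)
    have e2 : Real.exp (∫ u in Set.Ioc t s, max (-φ u) 0) ≤ Real.exp M :=
      Real.exp_le_exp.2 h2
    calc ξ s ≤ ξ t * Real.exp (-∫ u in Set.Ioc t s, φ u)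
          + ε * (s - t) * Real.exp (∫ u in Set.Ioc t s, max (-φ u) 0) := h
      _ ≤ ξ t * Real.exp M + ε * T * Real.exp M := by
          refine add_le_add (mul_le_mul_of_nonneg_left e1 hξt) ?_
          refine mul_le_mul (by nlinarith) e2 (Real.exp_pos _).le (by positivity)
  set E₀ : ℝ := ε * T * Real.exp M with hE₀def
  have hE₀ : 0 < E₀ := by positivity
  have h1θ : (0:ℝ) < 1 - θ := by linarith
  set D : ℝ := E₀ / (1 - θ) with hDdef
  have hD0 : 0 < D := div_pos hE₀ h1θ
  have hD : θ * D + E₀ = D := by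
    rw [hDdef]
    field_simp
    ring
  have hub : ∀ n : ℕ, ξ (t₃ + n * T) ≤ θ ^ n * ξ t₃ + D := by
    intro n
    induction n with
    | zero => norm_num; linarith
    | succ n IH =>
      have harg : t₃ + ((n:ℕ)+1 : ℕ) * T = (t₃ + n * T) + T := by push_cast; ring
      rw [harg]
      calc ξ ((t₃ + n * T) + T) ≤ θ * ξ (t₃ + n * T) + E₀ :=
            hstep (t₃ + n * T) (le_add_of_nonneg_right (by positivity))
        _ ≤ θ * (θ ^ n * ξ t₃ + D) + E₀ := by
            have := mul_le_mul_of_nonneg_left IH hθ0.le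
            linarith
        _ = θ ^ (n+1) * ξ t₃ + (θ * D + E₀) := by ring
        _ = θ ^ (n+1) * ξ t₃ + D := by rw [hD]
  have hhalf : 0 < δ / 2 := by linarith
  have hθpow : Tendsto (fun n : ℕ => θ ^ n * (ξ t₃ * Real.exp M)) atTop (𝓝 0) := by
    simpa using (tendsto_pow_atTop_nhds_zero_of_lt_one hθ0.le hθ1).mul_const (ξ t₃ * Real.exp M)
  rw [NormedAddCommGroup.tendsto_nhds_zero] at hθpow
  obtain ⟨n₀, hn₀⟩ := eventually_atTop.1 (hθpow (δ/2) hhalf)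
  have hξt₃ : 0 ≤ ξ t₃ := hξnonneg t₃ ht₃0
  have hn₀' : θ ^ n₀ * (ξ t₃ * Real.exp M) < δ / 2 := by
    have := hn₀ n₀ le_rfl
    rwa [Real.norm_eq_abs, abs_of_nonneg (by positivity)] at this
  have hDC : D * Real.exp M + E₀ = ε * Cc := by
    rw [hDdef, hE₀def, hCcdef]
    field_simp
  have hεCc : ε * Cc = δ / 2 := by
    rw [hεdef]
    field_simp
  clear_value M θ Cc ε E₀ D
  filter_upwards [eventually_ge_atTop (t₃ + n₀ * T)] with s hs
  have hst₃ : t₃ ≤ s := le_trans (le_add_of_nonneg_right (by positivity)) hs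
  have hs0 : 0 < s := ht₃0.trans_le hst₃
  set n : ℕ := ⌊(s - t₃)/T⌋₊ with hndef
  have hdivnn : 0 ≤ (s - t₃)/T := div_nonneg (by linarith) hT.le
  have hn1 : (n : ℝ) * T ≤ s - t₃ := by
    have h := Nat.floor_le hdivnn
    calc (n:ℝ) * T ≤ ((s - t₃)/T) * T := mul_le_mul_of_nonneg_right h hT.le
      _ = s - t₃ := by field_simp
  have hn2 : s - t₃ < ((n:ℝ) + 1) * T := by
    have h := Nat.lt_floor_add_one ((s - t₃)/T)
    calc s - t₃ = ((s - t₃)/T) * T := by field_simp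
      _ < ((n:ℝ) + 1) * T := by
          apply mul_lt_mul_of_pos_right _ hT
          exact_mod_cast h
  have hn₀n : n₀ ≤ n := by
    apply Nat.le_floor
    rw [le_div_iff₀ hT]
    linarith
  have ha3 : t₃ ≤ t₃ + n * T := le_add_of_nonneg_right (by positivity)
  have has : t₃ + n * T ≤ s := by linarith
  have hsa : s ≤ (t₃ + n * T) + T := by linarith
  have h1 := hmid (t₃ + n * T) s ha3 has hsa
  have h2 := hub n
  have h3 : θ ^ n ≤ θ ^ n₀ := pow_le_pow_of_le_one hθ0.le hθ1.le hn₀n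
  have k1 : ξ s ≤ (θ ^ n * ξ t₃ + D) * Real.exp M + E₀ :=
    le_trans h1 (by linarith [mul_le_mul_of_nonneg_right h2 (Real.exp_pos M).le])
  have k3 : θ ^ n * (ξ t₃ * Real.exp M) ≤ θ ^ n₀ * (ξ t₃ * Real.exp M) :=
    mul_le_mul_of_nonneg_right h3 (by positivity)
  have k1' : ξ s ≤ θ ^ n * (ξ t₃ * Real.exp M) + (D * Real.exp M + E₀) := by
    have hring : (θ ^ n * ξ t₃ + D) * Real.exp M + E₀
        = θ ^ n * (ξ t₃ * Real.exp M) + (D * Real.exp M + E₀) := by ring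
    linarith [k1]
  rw [Real.norm_eq_abs, abs_of_nonneg (hξnonneg s hs0)]
  linarith [k1', k3, hn₀', hDC, hεCc]
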